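/- Over F_4, σ**(x^{2k+1}) splits (is a product of linear factors) if and only if 2k+1 = N·2^n − 1 for some N ∈ {1,3} and some n ∈ ℕ. -/

import Mathlib

open Polynomial

variable {F : Type*} [Field F]

/-- `D` is a (monic) unitary divisor of `S`: `D ∣ S` and `gcd(D, S/D) = 1`. -/
def IsUnitaryDivisor (D S : Polynomial F) : Prop :=
  D.Monic ∧ D ∣ S ∧ IsCoprime D (S / D)

/-- `D` is a (monic) bi-unitary divisor of `S`: `gcd_u(D, S/D) = 1`, i.e. the only common
monic unitary divisor of `D` and `S/D` is `1`. -/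
def IsBiunitaryDivisor (D S : Polynomial F) : Prop :=
  D.Monic ∧ D ∣ S ∧
    ∀ G : Polynomial F, IsUnitaryDivisor G D → IsUnitaryDivisor G (S / D) → G = 1

/-- `σ(S)`: the sum of all monic divisors of `S`. -/
noncomputable def sigma' (S : Polynomial F) : Polynomial F :=
  ∑ᶠ D ∈ {D : Polynomial F | D.Monic ∧ D ∣ S}, D

/-- `σ**(S)`: the sum of all monic bi-unitary divisors of `S`. -/
noncomputable def sigmaStarStar (S : Polynomial F) : Polynomial F :=
  ∑ᶠ D ∈ {D : Polynomial F | IsBiunitaryDivisor D S}, D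

/-- `S` is bi-unitary perfect: `σ**(S) = S`. -/
def IsBUP (S : Polynomial F) : Prop := sigmaStarStar S = S

/-- The field with four elements. -/
abbrev F4 := GaloisField 2 2

/- ### Auxiliary lemmas -/

lemma aux_monic_dvd_X_pow {D : Polynomial F} {e : ℕ} (hm : D.Monic) (hd : D ∣ X ^ e) :
    ∃ d ≤ e, D = X ^ d := by
  obtain ⟨i, hi, ha⟩ := (dvd_prime_pow prime_X e).mp hd
  exact ⟨i, hi, eq_of_monic_of_associated hm (monic_X_pow i) ha⟩

lemma aux_X_pow_div {j d : ℕ} (h : j ≤ d) : (X ^ d / X ^ j : Polynomial F) = X ^ (d - j) := by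
  have : (X ^ d : Polynomial F) = X ^ j * X ^ (d - j) := by
    rw [← pow_add, Nat.add_sub_cancel' h]
  rw [this, mul_div_cancel_left₀ _ (pow_ne_zero _ X_ne_zero)]

lemma aux_unitary_X_pow {G : Polynomial F} {d : ℕ} (h : IsUnitaryDivisor G (X ^ d)) :
    G = 1 ∨ G = X ^ d := by
  obtain ⟨hm, hdvd, hcop⟩ := h
  obtain ⟨j, hj, rfl⟩ := aux_monic_dvd_X_pow hm hdvd
  rcases Nat.eq_zero_or_pos j with hj0 | hj0
  · left; simp [hj0]
  rcases Nat.eq_zero_or_pos (d - j) with hdj | hdj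
  · right; rw [Nat.le_antisymm hj (Nat.sub_eq_zero_iff_le.mp hdj)]
  · exfalso
    rw [aux_X_pow_div hj] at hcop
    exact not_isUnit_X
      (hcop.isUnit_of_dvd' (dvd_pow_self X hj0.ne') (dvd_pow_self X hdj.ne'))

lemma aux_X_pow_inj {a b : ℕ} (h : (X ^ a : Polynomial F) = X ^ b) : a = b := by
  have := congrArg natDegree h
  simpa using this

lemma aux_biunitary_X_pow {e : ℕ} (he : Odd e) (D : Polynomial F) :
    IsBiunitaryDivisor D (X ^ e) ↔ ∃ d ≤ e, D = X ^ d := by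
  constructor
  · rintro ⟨hm, hd, -⟩; exact aux_monic_dvd_X_pow hm hd
  · rintro ⟨d, hd, rfl⟩
    refine ⟨monic_X_pow d, pow_dvd_pow X hd, ?_⟩
    intro G hG1 hG2
    rw [aux_X_pow_div hd] at hG2
    rcases aux_unitary_X_pow hG1 with rfl | rfl
    · rfl
    rcases aux_unitary_X_pow hG2 with h1 | h2
    · exact h1
    · have hde : d = e - d := aux_X_pow_inj h2
      rcases Nat.eq_zero_or_pos d with h0 | h0
      · simp [h0]
      · exfalso
        have : e = 2 * d := by omega
        rw [this] at he
        exact (Nat.not_odd_iff_even.mpr ⟨d, by ring⟩) he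

lemma aux_sigmaStarStar_X_pow {e : ℕ} (he : Odd e) :
    sigmaStarStar (X ^ e : Polynomial F) = ∑ d ∈ Finset.range (e + 1), X ^ d := by
  classical
  unfold sigmaStarStar
  have hset : {D : Polynomial F | IsBiunitaryDivisor D (X ^ e)} =
      ↑((Finset.range (e + 1)).image fun d => (X : Polynomial F) ^ d) := by
    ext D
    simp only [Set.mem_setOf_eq, aux_biunitary_X_pow he, Finset.coe_image,
      Set.mem_image, Finset.mem_coe, Finset.mem_range, Nat.lt_succ_iff]
    constructor
    · rintro ⟨d, hd, rfl⟩; exact ⟨d, hd, rfl⟩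
    · rintro ⟨d, hd, rfl⟩; exact ⟨d, hd, rfl⟩
  rw [hset, finsum_mem_coe_finset, Finset.sum_image]
  intro a _ b _ h
  exact aux_X_pow_inj h

lemma aux_X_pow_sub_one_ne_zero {M : ℕ} (hM : M ≠ 0) : (X ^ M - 1 : Polynomial F) ≠ 0 := by
  intro h
  have h1 : (X ^ M - 1 : Polynomial F).natDegree = M := by
    simpa using natDegree_X_pow_sub_C (n := M) (r := (1 : F))
  rw [h] at h1
  simp at h1
  exact hM h1.symm

lemma aux_card_F4 : Nat.card F4 = 4 := by
  simpa using GaloisField.card 2 2 (by norm_num)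

lemma aux_splits_X_pow_sub_one (M : ℕ) (hM : M ≠ 0) :
    (X ^ M - 1 : Polynomial F4).Splits ↔
      ∃ N ∈ ({1, 3} : Set ℕ), ∃ n : ℕ, M = N * 2 ^ n := by
  induction M using Nat.strong_induction_on with
  | _ M ih =>
  have hdeg : (X ^ M - 1 : Polynomial F4).natDegree = M := by
    simpa using natDegree_X_pow_sub_C (n := M) (r := (1 : F4))
  rcases Nat.even_or_odd M with hev | hodd
  · -- even case
    obtain ⟨M', hM'⟩ := hev
    have hM'0 : M' ≠ 0 := by omega
    have hMlt : M' < M := by omega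
    have key : (X ^ M - 1 : Polynomial F4) = (X ^ M' - 1) ^ 2 := by
      have hMe : M = M' * 2 := by omega
      rw [sub_pow_char (p := 2), one_pow, ← pow_mul, hMe]
    rw [key]
    constructor
    · intro hs
      have hne : (X ^ M' - 1 : Polynomial F4) * (X ^ M' - 1) ≠ 0 :=
        mul_ne_zero (aux_X_pow_sub_one_ne_zero hM'0) (aux_X_pow_sub_one_ne_zero hM'0)
      rw [sq] at hs
      have hs' := Splits.of_dvd hs hne (dvd_mul_right _ _)
      obtain ⟨N, hN, n, hn⟩ := (ih M' hMlt hM'0).mp hs'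
      exact ⟨N, hN, n + 1, by rw [hM', hn]; ring⟩
    · rintro ⟨N, hN, n, hn⟩
      have hNodd : N = 1 ∨ N = 3 := hN
      have hn0 : n ≠ 0 := by
        rintro rfl
        rw [pow_zero, mul_one] at hn
        rcases hNodd with rfl | rfl <;> omega
      have hM'eq : M' = N * 2 ^ (n - 1) := by
        have h2 : 2 ^ n = 2 * 2 ^ (n - 1) := by
          conv_lhs => rw [← Nat.sub_add_cancel (Nat.one_le_iff_ne_zero.mpr hn0)]
          rw [pow_succ]; ring
        have hMeq : M = 2 * (N * 2 ^ (n - 1)) := by rw [hn, h2]; ring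
        omega
      have hs' := (ih M' hMlt hM'0).mpr ⟨N, hN, n - 1, hM'eq⟩
      exact hs'.pow 2
  · -- odd case
    constructor
    · intro hs
      have hcast : ((M : ℕ) : F4) ≠ 0 := by
        rw [Ne, CharP.cast_eq_zero_iff F4 2]
        exact fun h => (Nat.not_even_iff_odd.mpr hodd) (even_iff_two_dvd.mpr h)
      have hsep : (X ^ M - 1 : Polynomial F4).Separable :=
        X_pow_sub_one_separable_iff.mpr hcast
      have hnodup := nodup_roots hsep
      have hcard : Multiset.card (X ^ M - 1 : Polynomial F4).roots = M := by
        rw [splits_iff_card_roots] at hs; rw [hs, hdeg]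
      have : Fintype F4 := Fintype.ofFinite _
      have h4 : Fintype.card F4 = 4 := by
        rw [← Nat.card_eq_fintype_card]; exact aux_card_F4
      have hle : Multiset.card (X ^ M - 1 : Polynomial F4).roots ≤ 4 := by
        classical
        rw [← Multiset.toFinset_card_of_nodup hnodup]
        rw [← h4]
        exact Finset.card_le_univ _
      have hM4 : M ≤ 4 := hcard ▸ hle
      obtain ⟨t, ht⟩ := hodd
      have : M = 1 ∨ M = 3 := by omega
      rcases this with rfl | rfl
      · exact ⟨1, by simp, 0, by norm_num⟩
      · exact ⟨3, by simp, 0, by norm_num⟩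
    · rintro ⟨N, hN, n, hn⟩
      have hNodd : N = 1 ∨ N = 3 := hN
      have hn0 : n = 0 := by
        by_contra h
        have : 2 ∣ 2 ^ n := dvd_pow_self 2 h
        have : 2 ∣ M := hn ▸ Dvd.dvd.mul_left this N
        exact (Nat.not_even_iff_odd.mpr hodd) (even_iff_two_dvd.mpr this)
      subst hn0
      rw [pow_zero, mul_one] at hn
      subst hn
      rcases hNodd with rfl | rfl
      · exact Splits.of_natDegree_le_one hdeg.le
      · -- X^3 - 1 splits over F4
        have : Fintype F4 := Fintype.ofFinite _
        have h4 : Fintype.card F4 = 4 := by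
          rw [← Nat.card_eq_fintype_card]; exact aux_card_F4
        classical
        have hne : (X ^ 3 - 1 : Polynomial F4) ≠ 0 := aux_X_pow_sub_one_ne_zero (by norm_num)
        have hsub : (Finset.univ.erase (0 : F4)) ⊆ (X ^ 3 - 1 : Polynomial F4).roots.toFinset := by
          intro a ha
          rw [Finset.mem_erase] at ha
          rw [Multiset.mem_toFinset, mem_roots hne]
          have : a ^ 3 = 1 := by
            have := FiniteField.pow_card_sub_one_eq_one a ha.1
            rwa [h4] at this
          simp [IsRoot, this]
        have h3 : (Finset.univ.erase (0 : F4)).card = 3 := by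
          rw [Finset.card_erase_of_mem (Finset.mem_univ _), Finset.card_univ, h4]
        have hge : 3 ≤ Multiset.card (X ^ 3 - 1 : Polynomial F4).roots := by
          calc 3 = (Finset.univ.erase (0 : F4)).card := h3.symm
            _ ≤ (X ^ 3 - 1 : Polynomial F4).roots.toFinset.card := Finset.card_le_card hsub
            _ ≤ Multiset.card (X ^ 3 - 1 : Polynomial F4).roots := Multiset.toFinset_card_le _
        have hle : Multiset.card (X ^ 3 - 1 : Polynomial F4).roots ≤ 3 := by
          have := card_roots' (X ^ 3 - 1 : Polynomial F4)
          rwa [hdeg] at this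
        rw [splits_iff_card_roots, hdeg]
        omega

theorem stmt5 (k : ℕ) :
    (sigmaStarStar (X ^ (2 * k + 1) : Polynomial F4)).Splits ↔
      ∃ N ∈ ({1, 3} : Set ℕ), ∃ n : ℕ, 2 * k + 1 = N * 2 ^ n - 1 := by
  have hodd : Odd (2 * k + 1) := ⟨k, by ring⟩
  rw [aux_sigmaStarStar_X_pow hodd]
  set P : Polynomial F4 := ∑ d ∈ Finset.range (2 * k + 1 + 1), X ^ d with hP
  have hmul : P * (X - 1) = X ^ (2 * k + 2) - 1 := by
    simpa using geom_sum_mul (X : Polynomial F4) (2 * k + 2)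
  have hne : (X ^ (2 * k + 2) - 1 : Polynomial F4) ≠ 0 :=
    aux_X_pow_sub_one_ne_zero (by omega)
  have hiff : P.Splits ↔
      (X ^ (2 * k + 2) - 1 : Polynomial F4).Splits := by
    constructor
    · intro h
      rw [← hmul]
      have hX1 : (X - 1 : Polynomial F4) = X - C 1 := by rw [map_one]
      exact h.mul (hX1 ▸ Splits.X_sub_C _)
    · intro h
      rw [← hmul] at h hne
      exact Splits.of_dvd h hne (dvd_mul_right _ _)
  rw [hiff, aux_splits_X_pow_sub_one (2 * k + 2) (by omega)]
  constructor
  · rintro ⟨N, hN, n, hn⟩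
    exact ⟨N, hN, n, by omega⟩
  · rintro ⟨N, hN, n, hn⟩
    have hNval : N = 1 ∨ N = 3 := hN
    have h2n : 1 ≤ 2 ^ n := Nat.one_le_two_pow
    refine ⟨N, hN, n, ?_⟩
    rcases hNval with rfl | rfl <;> omega
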